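/- (Representation formula II, continuous case.) Let p be a probability density on ℝ positive exactly on the open interval S = (a, b), with cumulative distribution function F, and let X, X₁, X₂ be i.i.d. with density p. Define K_p(x, x') = F(min(x, x')) − F(x) F(x'). Then: (i) 0 ≤ K_p(x, x') ≤ 1 for all x, x' (indeed K_p(x,x') = F(min(x,x'))(1 − F(max(x,x'))) ≥ 0); (ii) for all locally absolutely continuous h, g with E[h(X)²] < ∞, E[g(X)²] < ∞ and the double integral below absolutely convergent, Cov[h(X), g(X)] = ∫_S ∫_S h'(x) K_p(x, x') g'(x') dx dx' = E[h'(X₁) (K_p(X₁, X₂)/(p(X₁) p(X₂))) g'(X₂)]; (iii) for every locally absolutely continuous h with E|h(X)| < ∞ and E[|h'(X)| K_p(X, x')/p(X)] < ∞, one has −L_p h(x') = E[(K_p(X, x')/(p(X) p(x'))) h'(X)] for every x' ∈ S. -/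

import Mathlib

open MeasureTheory Set
open scoped ENNReal

/-- The cumulative distribution function of the density `p`. -/
noncomputable def cdfOf (p : ℝ → ℝ) (x : ℝ) : ℝ := ∫ u in Iic x, p u

/-- The covariance kernel `K_p(x,x') = F(min(x,x')) − F(x)F(x')`. -/
noncomputable def kerK (p : ℝ → ℝ) (x x' : ℝ) : ℝ :=
  cdfOf p (min x x') - cdfOf p x * cdfOf p x'

/-- The inverse Stein operator
`L_p h (x) = (1/p(x)) ∫_a^x (h(u) − E[h(X)]) p(u) du`. -/
noncomputable def invStein (p h : ℝ → ℝ) (x : ℝ) : ℝ :=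
  (∫ u in Iio x, (h u - ∫ y, h y * p y) * p u) / p x

/-- `h` is locally absolutely continuous on `S` with a.e. derivative `h'`,
expressed through the fundamental theorem of calculus. -/
def LocAC (S : Set ℝ) (h h' : ℝ → ℝ) : Prop :=
  ∀ x ∈ S, ∀ y ∈ S, IntervalIntegrable h' MeasureTheory.volume x y ∧
    h y - h x = ∫ t in x..y, h' t

namespace RepII

/-- auxiliary weight function -/
noncomputable def wA (p : ℝ → ℝ) (u x : ℝ) : ℝ :=
  (if u ≤ x then (1:ℝ) else 0) - cdfOf p x

section Basic

variable {p : ℝ → ℝ} {S : Set ℝ}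

lemma int_p (hp1 : ∫ x, p x = 1) : Integrable p volume := by
  by_contra hc
  rw [integral_undef hc] at hp1
  norm_num at hp1

lemma p_eq_zero (hp0 : ∀ x, 0 ≤ p x) (hppos : ∀ x : ℝ, 0 < p x ↔ x ∈ S)
    {x : ℝ} (hx : x ∉ S) : p x = 0 :=
  le_antisymm (by by_contra hc; exact hx ((hppos x).1 (lt_of_le_of_ne (hp0 x) (fun h => hc h.ge)))) (hp0 x)

lemma F_nonneg (hp0 : ∀ x, 0 ≤ p x) (x : ℝ) : 0 ≤ cdfOf p x :=
  setIntegral_nonneg measurableSet_Iic (fun u _ => hp0 u)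

lemma F_mono (hp0 : ∀ x, 0 ≤ p x) (hp1 : ∫ x, p x = 1) : Monotone (cdfOf p) := by
  intro x y hxy
  exact setIntegral_mono_set ((int_p hp1).integrableOn)
    (Filter.Eventually.of_forall fun u => hp0 u)
    (HasSubset.Subset.eventuallyLE (Iic_subset_Iic.2 hxy))

lemma F_meas (hp0 : ∀ x, 0 ≤ p x) (hp1 : ∫ x, p x = 1) : Measurable (cdfOf p) :=
  (F_mono hp0 hp1).measurable

lemma F_le_one (hp0 : ∀ x, 0 ≤ p x) (hp1 : ∫ x, p x = 1) (x : ℝ) : cdfOf p x ≤ 1 := by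
  rw [← hp1]
  exact setIntegral_le_integral (int_p hp1) (Filter.Eventually.of_forall fun u => hp0 u)

lemma int_Iio (x : ℝ) : ∫ u in Iio x, p u = cdfOf p x := by
  rw [cdfOf]
  exact setIntegral_congr_set Iio_ae_eq_Iic

lemma int_Ioi (hp1 : ∫ x, p x = 1) (x : ℝ) : ∫ u in Ioi x, p u = 1 - cdfOf p x := by
  have h := integral_add_compl (measurableSet_Iic (a := x)) (int_p hp1) (μ := volume)
  rw [compl_Iic] at h
  rw [hp1] at h
  unfold cdfOf
  linarith

lemma int_Ici (hp1 : ∫ x, p x = 1) (x : ℝ) : ∫ u in Ici x, p u = 1 - cdfOf p x := by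
  rw [← int_Ioi hp1]
  exact (setIntegral_congr_set Ioi_ae_eq_Ici).symm

lemma below_or_above (hSconn : S.OrdConnected) {x : ℝ} (hx : x ∉ S) :
    (∀ s ∈ S, x < s) ∨ (∀ s ∈ S, s < x) := by
  by_contra hc
  push_neg at hc
  obtain ⟨⟨s₁, hs₁, hs₁x⟩, ⟨s₂, hs₂, hs₂x⟩⟩ := hc
  exact hx (hSconn.out hs₁ hs₂ ⟨hs₁x, hs₂x⟩)

lemma F_zero_of_below (hp0 : ∀ x, 0 ≤ p x) (hppos : ∀ x : ℝ, 0 < p x ↔ x ∈ S)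
    {x : ℝ} (hx : ∀ s ∈ S, x < s) : cdfOf p x = 0 := by
  rw [cdfOf]
  rw [setIntegral_congr_fun measurableSet_Iic
    (fun u (hu : u ∈ Iic x) => p_eq_zero hp0 hppos
      (fun huS => absurd hu.out (hx u huS).not_ge) : EqOn p 0 (Iic x))]
  exact integral_zero _ _


lemma F_one_of_above (hp0 : ∀ x, 0 ≤ p x) (hppos : ∀ x : ℝ, 0 < p x ↔ x ∈ S)
    (hp1 : ∫ x, p x = 1) {x : ℝ} (hx : ∀ s ∈ S, s < x) : cdfOf p x = 1 := by
  have h := int_Ioi (p := p) hp1 x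
  rw [setIntegral_congr_fun measurableSet_Ioi
    (fun u (hu : u ∈ Ioi x) => p_eq_zero hp0 hppos
      (fun huS => absurd hu.out (hx u huS).not_gt) : EqOn p 0 (Ioi x)),
    integral_zero] at h
  linarith

lemma F_dichotomy (hSconn : S.OrdConnected) (hp0 : ∀ x, 0 ≤ p x)
    (hppos : ∀ x : ℝ, 0 < p x ↔ x ∈ S) (hp1 : ∫ x, p x = 1)
    {x : ℝ} (hx : x ∉ S) : cdfOf p x = 0 ∨ cdfOf p x = 1 := by
  rcases below_or_above hSconn hx with h | h
  · exact Or.inl (F_zero_of_below hp0 hppos h)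
  · exact Or.inr (F_one_of_above hp0 hppos hp1 h)

lemma F_pos (hSopen : IsOpen S) (hpmeas : Measurable p) (hp0 : ∀ x, 0 ≤ p x)
    (hppos : ∀ x : ℝ, 0 < p x ↔ x ∈ S) (hp1 : ∫ x, p x = 1)
    {x : ℝ} (hx : x ∈ S) : 0 < cdfOf p x := by
  obtain ⟨ε, hε, hball⟩ := Metric.isOpen_iff.1 hSopen x hx
  rw [Real.ball_eq_Ioo] at hball
  have hsub : Ioo (x - ε) x ⊆ S := fun t ht => hball ⟨ht.1, ht.2.trans (by linarith)⟩
  have hpos : 0 < ∫ u in Ioo (x - ε) x, p u := by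
    rw [setIntegral_pos_iff_support_of_nonneg_ae
      (Filter.Eventually.of_forall fun u => hp0 u) ((int_p hp1).integrableOn)]
    have hss : Ioo (x - ε) x ⊆ Function.support p ∩ Ioo (x - ε) x := fun t ht =>
      ⟨fun h0 => absurd ((hppos t).2 (hsub ht)) (by rw [h0]; exact lt_irrefl 0), ht⟩
    have hv : (0:ℝ≥0∞) < volume (Ioo (x - ε) x) := by
      rw [Real.volume_Ioo]
      simp only [ENNReal.ofReal_pos]
      linarith
    exact lt_of_lt_of_le hv (measure_mono hss)
  have hle : ∫ u in Ioo (x - ε) x, p u ≤ cdfOf p x :=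
    setIntegral_mono_set ((int_p hp1).integrableOn)
      (Filter.Eventually.of_forall fun u => hp0 u)
      (HasSubset.Subset.eventuallyLE (fun t ht => ht.2.le))
  linarith

lemma F_lt_one (hSopen : IsOpen S) (hpmeas : Measurable p) (hp0 : ∀ x, 0 ≤ p x)
    (hppos : ∀ x : ℝ, 0 < p x ↔ x ∈ S) (hp1 : ∫ x, p x = 1)
    {x : ℝ} (hx : x ∈ S) : cdfOf p x < 1 := by
  obtain ⟨ε, hε, hball⟩ := Metric.isOpen_iff.1 hSopen x hx
  rw [Real.ball_eq_Ioo] at hball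
  have hsub : Ioo x (x + ε) ⊆ S := fun t ht => hball ⟨by linarith [ht.1], ht.2⟩
  have hpos : 0 < ∫ u in Ioo x (x + ε), p u := by
    rw [setIntegral_pos_iff_support_of_nonneg_ae
      (Filter.Eventually.of_forall fun u => hp0 u) ((int_p hp1).integrableOn)]
    have hss : Ioo x (x + ε) ⊆ Function.support p ∩ Ioo x (x + ε) := fun t ht =>
      ⟨fun h0 => absurd ((hppos t).2 (hsub ht)) (by rw [h0]; exact lt_irrefl 0), ht⟩
    have hv : (0:ℝ≥0∞) < volume (Ioo x (x + ε)) := by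
      rw [Real.volume_Ioo]
      simp only [ENNReal.ofReal_pos]
      linarith
    exact lt_of_lt_of_le hv (measure_mono hss)
  have h2 : ∫ u in Ioo x (x + ε), p u ≤ ∫ u in Ioi x, p u :=
    setIntegral_mono_set ((int_p hp1).integrableOn)
      (Filter.Eventually.of_forall fun u => hp0 u)
      (HasSubset.Subset.eventuallyLE (fun t ht => ht.1))
  rw [int_Ioi hp1] at h2
  linarith

/-- the kernel is symmetric -/
lemma kerK_symm (x y : ℝ) : kerK p x y = kerK p y x := by
  unfold kerK; rw [min_comm, mul_comm]

lemma kerK_eq_of_le (hp0 : ∀ x, 0 ≤ p x) {x y : ℝ} (hxy : x ≤ y) :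
    kerK p x y = cdfOf p x * (1 - cdfOf p y) := by
  unfold kerK; rw [min_eq_left hxy]; ring

lemma kerK_nonneg (hp0 : ∀ x, 0 ≤ p x) (hp1 : ∫ x, p x = 1) (x y : ℝ) :
    0 ≤ kerK p x y := by
  rcases le_total x y with hxy | hxy
  · rw [kerK_eq_of_le hp0 hxy]
    exact mul_nonneg (F_nonneg hp0 x) (by linarith [F_le_one hp0 hp1 y])
  · rw [kerK_symm, kerK_eq_of_le hp0 hxy]
    exact mul_nonneg (F_nonneg hp0 y) (by linarith [F_le_one hp0 hp1 x])

lemma kerK_le_one (hp0 : ∀ x, 0 ≤ p x) (hp1 : ∫ x, p x = 1) (x y : ℝ) :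
    kerK p x y ≤ 1 := by
  unfold kerK
  have := F_le_one hp0 hp1 (min x y)
  have := mul_nonneg (F_nonneg hp0 x) (F_nonneg hp0 y)
  linarith

lemma kerK_zero_left (hSconn : S.OrdConnected) (hp0 : ∀ x, 0 ≤ p x)
    (hppos : ∀ x : ℝ, 0 < p x ↔ x ∈ S) (hp1 : ∫ x, p x = 1)
    {x : ℝ} (hx : x ∉ S) (y : ℝ) : kerK p x y = 0 := by
  rcases F_dichotomy hSconn hp0 hppos hp1 hx with h | h
  · rcases le_total x y with hxy | hxy
    · rw [kerK_eq_of_le hp0 hxy, h, zero_mul]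
    · rw [kerK_symm, kerK_eq_of_le hp0 hxy]
      have h0 : cdfOf p y ≤ 0 := h ▸ F_mono hp0 hp1 hxy
      have := F_nonneg hp0 y
      nlinarith [F_le_one hp0 hp1 x]
  · rcases le_total y x with hxy | hxy
    · rw [kerK_symm, kerK_eq_of_le hp0 hxy, h]; ring
    · rw [kerK_eq_of_le hp0 hxy]
      have h1 : (1:ℝ) ≤ cdfOf p y := h ▸ F_mono hp0 hp1 hxy
      nlinarith [F_le_one hp0 hp1 y, F_nonneg hp0 x]

/-- |wA u x| in closed form -/
lemma abs_wA (hp0 : ∀ x, 0 ≤ p x) (hp1 : ∫ x, p x = 1) (u x : ℝ) :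
    |wA p u x| = if u ≤ x then 1 - cdfOf p x else cdfOf p x := by
  unfold wA
  have h0 := F_nonneg hp0 x
  have h1 := F_le_one hp0 hp1 x
  split_ifs with hc
  · rw [abs_of_nonneg (by linarith)]
  · rw [show (0:ℝ) - cdfOf p x = -(cdfOf p x) by ring, abs_neg, abs_of_nonneg h0]

lemma abs_wA_le_one (hp0 : ∀ x, 0 ≤ p x) (hp1 : ∫ x, p x = 1) (u x : ℝ) :
    |wA p u x| ≤ 1 := by
  rw [abs_wA hp0 hp1]
  have h0 := F_nonneg hp0 x
  have h1 := F_le_one hp0 hp1 x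
  split <;> linarith

lemma wA_meas (hp0 : ∀ x, 0 ≤ p x) (hp1 : ∫ x, p x = 1) (u : ℝ) :
    Measurable (wA p u) := by
  apply Measurable.sub
  · exact Measurable.ite (measurableSet_le measurable_const measurable_id)
      measurable_const measurable_const
  · exact F_meas hp0 hp1

end Basic

section Helpers

lemma integral_zero_off {α : Type*} [MeasurableSpace α] {μ : Measure α} {f : α → ℝ}
    {S : Set α} (hSm : MeasurableSet S) (h0 : ∀ x ∉ S, f x = 0) :
    ∫ x, f x ∂μ = ∫ x in S, f x ∂μ := by
  rw [← integral_indicator hSm]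
  congr 1
  funext x
  by_cases hx : x ∈ S
  · simp [indicator_apply, hx]
  · simp [indicator_apply, hx, h0 x hx]

lemma setIntegral_inter_eq {f : ℝ → ℝ} {A S : Set ℝ} (hSm : MeasurableSet S)
    (h0 : ∀ x ∉ S, f x = 0) :
    ∫ x in A, f x = ∫ x in S ∩ A, f x := by
  rw [← Measure.restrict_restrict hSm]
  exact integral_zero_off (μ := volume.restrict A) hSm h0

lemma integrable_prod_of_bound₂ {α β : Type*} [MeasurableSpace α] [MeasurableSpace β]
    {μ : Measure α} {ν : Measure β} [SFinite μ] [SFinite ν]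
    {f : α × β → ℝ} (hf : Measurable f)
    (hslice : ∀ᵐ t ∂ν, Integrable (fun y => f (y, t)) μ)
    {g : β → ℝ} (hg : Integrable g ν)
    (hb : ∀ᵐ t ∂ν, (∫ y, ‖f (y, t)‖ ∂μ) ≤ g t) :
    Integrable f (μ.prod ν) := by
  rw [integrable_prod_iff' hf.aestronglyMeasurable]
  refine ⟨hslice, Integrable.mono' hg
    hf.norm.stronglyMeasurable.integral_prod_left'.aestronglyMeasurable ?_⟩
  filter_upwards [hb] with t hbt
  rw [Real.norm_eq_abs, abs_of_nonneg (integral_nonneg fun y => norm_nonneg _)]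
  exact hbt

lemma integrable_prod_of_bound₁ {α β : Type*} [MeasurableSpace α] [MeasurableSpace β]
    {μ : Measure α} {ν : Measure β} [SFinite μ] [SFinite ν]
    {f : α × β → ℝ} (hf : Measurable f)
    (hslice : ∀ᵐ x ∂μ, Integrable (fun t => f (x, t)) ν)
    {g : α → ℝ} (hg : Integrable g μ)
    (hb : ∀ᵐ x ∂μ, (∫ t, ‖f (x, t)‖ ∂ν) ≤ g x) :
    Integrable f (μ.prod ν) := by
  rw [integrable_prod_iff hf.aestronglyMeasurable]
  refine ⟨hslice, Integrable.mono' hg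
    hf.norm.stronglyMeasurable.integral_prod_right'.aestronglyMeasurable ?_⟩
  filter_upwards [hb] with x hbx
  rw [Real.norm_eq_abs, abs_of_nonneg (integral_nonneg fun y => norm_nonneg _)]
  exact hbx

lemma intervalIntegral_eq_indicator (h' : ℝ → ℝ) (u y : ℝ) :
    (∫ t in u..y, h' t) =
      ∫ t, h' t * ((Ioc u y).indicator 1 t - (Ioc y u).indicator 1 t) := by
  rcases le_total u y with hc | hc
  · rw [intervalIntegral.integral_of_le hc, ← integral_indicator measurableSet_Ioc]
    congr 1
    funext t
    rw [Ioc_eq_empty (not_lt.mpr hc)]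
    by_cases ht : t ∈ Ioc u y <;> simp [indicator_apply, ht]
  · rw [intervalIntegral.integral_of_ge hc, ← integral_neg,
      ← integral_indicator measurableSet_Ioc]
    congr 1
    funext t
    rw [Ioc_eq_empty (not_lt.mpr hc)]
    by_cases ht : t ∈ Ioc y u <;> simp [indicator_apply, ht]

end Helpers

section LemB

variable {p : ℝ → ℝ} {S : Set ℝ}

lemma W_zero_off (hSconn : S.OrdConnected) {u y t : ℝ} (hu : u ∈ S) (hy : y ∈ S)
    (ht : t ∉ S) :
    ((Ioc u y).indicator (1 : ℝ → ℝ) t - (Ioc y u).indicator 1 t) = 0 := by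
  rcases below_or_above hSconn ht with hb | hb
  · have h1 : t ∉ Ioc u y := fun hc => absurd hc.1 (not_lt.mpr (hb u hu).le)
    have h2 : t ∉ Ioc y u := fun hc => absurd hc.1 (not_lt.mpr (hb y hy).le)
    simp [indicator_of_notMem h1, indicator_of_notMem h2]
  · have h1 : t ∉ Ioc u y := fun hc => absurd hc.2 (not_le.mpr (hb y hy))
    have h2 : t ∉ Ioc y u := fun hc => absurd hc.2 (not_le.mpr (hb u hu))
    simp [indicator_of_notMem h1, indicator_of_notMem h2]

lemma ae_ne_restrict (S : Set ℝ) (u : ℝ) : ∀ᵐ t ∂(volume.restrict S), t ≠ u := by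
  rw [Filter.eventually_iff, mem_ae_iff]
  have hsub : {t : ℝ | t ≠ u}ᶜ ⊆ {u} := by
    intro t ht
    simp only [mem_compl_iff, mem_setOf_eq, not_not] at ht
    simp [ht]
  exact measure_mono_null hsub (le_antisymm
    (le_trans (Measure.restrict_le_self _) (by simp)) (by simp))

/-- For `u < t`, the weight `W y t` times `p y`, as a function of `y`. -/
lemma Wp_eq_pos {u t : ℝ} (hut : u < t) (p : ℝ → ℝ) :
    (fun y => ((Ioc u y).indicator (1:ℝ→ℝ) t - (Ioc y u).indicator 1 t) * p y)
      = (Ici t).indicator p := by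
  funext y
  have h2 : t ∉ Ioc y u := fun hc => absurd (lt_of_lt_of_le hut hc.2) (lt_irrefl u)
  by_cases hy : t ≤ y
  · rw [indicator_of_mem (mem_Ioc.mpr ⟨hut, hy⟩), indicator_of_notMem h2,
      indicator_of_mem (mem_Ici.mpr hy)]
    simp
  · rw [indicator_of_notMem (fun hc => hy (mem_Ioc.mp hc).2), indicator_of_notMem h2,
      indicator_of_notMem (fun hc => hy (mem_Ici.mp hc))]
    ring

/-- For `t < u`, the weight `W y t` times `p y`, as a function of `y`. -/
lemma Wp_eq_neg {u t : ℝ} (htu : t < u) (p : ℝ → ℝ) :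
    (fun y => ((Ioc u y).indicator (1:ℝ→ℝ) t - (Ioc y u).indicator 1 t) * p y)
      = fun y => -((Iio t).indicator p y) := by
  funext y
  have h1 : t ∉ Ioc u y := fun hc => absurd (lt_trans htu hc.1) (lt_irrefl t)
  by_cases hy : y < t
  · rw [indicator_of_notMem h1, indicator_of_mem (mem_Ioc.mpr ⟨hy, htu.le⟩),
      indicator_of_mem (mem_Iio.mpr hy)]
    simp
  · rw [indicator_of_notMem h1, indicator_of_notMem (fun hc => hy (mem_Ioc.mp hc).1),
      indicator_of_notMem (fun hc => hy (mem_Iio.mp hc))]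
    ring

/-- Lemma B: the FTC/Fubini identity `∫_S h'(t) wA(u,t) dt = E[h] - h(u)`. -/
lemma lemB (hSopen : IsOpen S) (hSconn : S.OrdConnected)
    (hpmeas : Measurable p) (hp0 : ∀ x, 0 ≤ p x)
    (hppos : ∀ x : ℝ, 0 < p x ↔ x ∈ S) (hp1 : ∫ x, p x = 1)
    {h h' : ℝ → ℝ} (hm' : Measurable h') (hL : LocAC S h h')
    (hhp : Integrable (fun x => h x * p x))
    {u : ℝ} (hu : u ∈ S)
    (hI : IntegrableOn (fun t => h' t * wA p u t) S volume) :
    ∫ t in S, h' t * wA p u t = (∫ y, h y * p y) - h u := by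
  have hSm : MeasurableSet S := hSopen.measurableSet
  have hpInt : Integrable p := int_p hp1
  -- Step 1: RHS as an integral over S
  have h1 : (∫ y, h y * p y) - h u = ∫ y in S, (h y - h u) * p y := by
    have e1 : ∫ y, h y * p y = ∫ y in S, h y * p y :=
      integral_zero_off hSm (fun x hx => by rw [p_eq_zero hp0 hppos hx, mul_zero])
    have e2 : ∫ y in S, p y = 1 := by
      rw [← integral_zero_off hSm (fun x hx => p_eq_zero hp0 hppos hx), hp1]
    have e3 : ∫ y in S, (h y - h u) * p y
        = (∫ y in S, h y * p y) - ∫ y in S, h u * p y := by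
      rw [← integral_sub hhp.integrableOn ((hpInt.const_mul (h u)).integrableOn)]
      congr 1; funext y; ring
    rw [e3, integral_const_mul, e2, mul_one, e1]
  -- the double integrand
  set f : ℝ → ℝ → ℝ := fun y t =>
    (h' t * ((Ioc u y).indicator 1 t - (Ioc y u).indicator 1 t)) * p y with hfdef
  -- measurability of the double integrand
  have hfmeas : Measurable (Function.uncurry f) := by
    have i1 : Measurable fun z : ℝ × ℝ => (Ioc u z.1).indicator (1 : ℝ → ℝ) z.2 := by
      have e : (fun z : ℝ × ℝ => (Ioc u z.1).indicator (1 : ℝ → ℝ) z.2)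
          = fun z : ℝ × ℝ => if u < z.2 ∧ z.2 ≤ z.1 then (1:ℝ) else 0 := by
        funext z; by_cases hz : u < z.2 ∧ z.2 ≤ z.1
        · rw [indicator_of_mem (mem_Ioc.mpr hz), if_pos hz]; rfl
        · rw [indicator_of_notMem (fun hc => hz (mem_Ioc.mp hc)), if_neg hz]
      rw [e]
      exact Measurable.ite ((measurableSet_lt measurable_const measurable_snd).inter
        (measurableSet_le measurable_snd measurable_fst)) measurable_const measurable_const
    have i2 : Measurable fun z : ℝ × ℝ => (Ioc z.1 u).indicator (1 : ℝ → ℝ) z.2 := by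
      have e : (fun z : ℝ × ℝ => (Ioc z.1 u).indicator (1 : ℝ → ℝ) z.2)
          = fun z : ℝ × ℝ => if z.1 < z.2 ∧ z.2 ≤ u then (1:ℝ) else 0 := by
        funext z; by_cases hz : z.1 < z.2 ∧ z.2 ≤ u
        · rw [indicator_of_mem (mem_Ioc.mpr hz), if_pos hz]; rfl
        · rw [indicator_of_notMem (fun hc => hz (mem_Ioc.mp hc)), if_neg hz]
      rw [e]
      exact Measurable.ite ((measurableSet_lt measurable_fst measurable_snd).inter
        (measurableSet_le measurable_snd measurable_const)) measurable_const measurable_const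
    exact ((hm'.comp measurable_snd).mul (i1.sub i2)).mul (hpmeas.comp measurable_fst)
  -- inner integral in `y` (for t ≠ u)
  have hinner : ∀ t : ℝ, t ≠ u →
      (∫ y in S, ((Ioc u y).indicator (1:ℝ→ℝ) t - (Ioc y u).indicator 1 t) * p y)
        = wA p u t := by
    intro t htu
    rcases lt_or_ge u t with hut | htu'
    · rw [Wp_eq_pos hut p, integral_indicator measurableSet_Ici,
        Measure.restrict_restrict measurableSet_Ici, inter_comm,
        ← setIntegral_inter_eq hSm (fun x hx => p_eq_zero hp0 hppos hx),
        int_Ici hp1]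
      unfold wA
      rw [if_pos hut.le]
    · have htu2 : t < u := lt_of_le_of_ne htu' htu
      rw [Wp_eq_neg htu2 p, integral_neg, integral_indicator measurableSet_Iio,
        Measure.restrict_restrict measurableSet_Iio, inter_comm,
        ← setIntegral_inter_eq hSm (fun x hx => p_eq_zero hp0 hppos hx),
        int_Iio]
      unfold wA
      rw [if_neg (not_le.mpr htu2)]
      ring
  -- integrability of the double integrand on S ×ˢ S
  have hfint : Integrable (Function.uncurry f)
      ((volume.restrict S).prod (volume.restrict S)) := by
    apply integrable_prod_of_bound₂ hfmeas (g := fun t => |h' t * wA p u t|)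
    · -- slices in y are integrable
      refine Filter.Eventually.of_forall fun t => ?_
      apply Integrable.restrict (f := fun y => f y t)
      apply Integrable.mono' (hpInt.const_mul (|h' t| * 2))
        ((hfmeas.comp (measurable_id.prodMk measurable_const)).aestronglyMeasurable)
      refine Filter.Eventually.of_forall fun y => ?_
      have a1 : ∀ s : Set ℝ, |s.indicator (1:ℝ→ℝ) t| ≤ 1 := by
        intro s; by_cases ht : t ∈ s
        · rw [indicator_of_mem ht]; norm_num
        · rw [indicator_of_notMem ht]; norm_num
      have i1 : |(Ioc u y).indicator (1:ℝ→ℝ) t - (Ioc y u).indicator 1 t| ≤ 2 := by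
        have := a1 (Ioc u y); have := a1 (Ioc y u)
        have habs := abs_sub ((Ioc u y).indicator (1:ℝ→ℝ) t) ((Ioc y u).indicator (1:ℝ→ℝ) t)
        linarith
      have hb : ‖f y t‖ ≤ |h' t| * 2 * p y := by
        rw [hfdef]
        simp only [Real.norm_eq_abs, abs_mul, abs_of_nonneg (hp0 y)]
        have : |h' t| * |(Ioc u y).indicator (1:ℝ→ℝ) t - (Ioc y u).indicator 1 t|
            ≤ |h' t| * 2 := mul_le_mul_of_nonneg_left i1 (abs_nonneg _)
        exact mul_le_mul_of_nonneg_right this (hp0 y)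
      exact hb
    · exact hI.norm
    · -- a.e. bound on ∫_y ‖f y t‖
      filter_upwards [ae_ne_restrict S u] with t htu
      rcases lt_or_ge u t with hut | htu'
      · have he : (fun y => ‖Function.uncurry f (y, t)‖)
            = fun y => |h' t| * (Ici t).indicator p y := by
          funext y
          have hw := congrFun (Wp_eq_pos hut p) y
          have e0 : Function.uncurry f (y, t) = h' t *
              (((Ioc u y).indicator (1:ℝ→ℝ) t - (Ioc y u).indicator 1 t) * p y) := by
            rw [hfdef]; simp [Function.uncurry]; ring
          rw [e0, Real.norm_eq_abs, abs_mul, hw,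
            abs_of_nonneg (indicator_nonneg (fun x _ => hp0 x) y)]
        rw [he, integral_const_mul, integral_indicator measurableSet_Ici,
          Measure.restrict_restrict measurableSet_Ici, inter_comm,
          ← setIntegral_inter_eq hSm (fun x hx => p_eq_zero hp0 hppos hx),
          int_Ici hp1, abs_mul, abs_wA hp0 hp1, if_pos hut.le]
      · have htu2 : t < u := lt_of_le_of_ne htu' htu
        have he : (fun y => ‖Function.uncurry f (y, t)‖)
            = fun y => |h' t| * (Iio t).indicator p y := by
          funext y
          have hw := congrFun (Wp_eq_neg htu2 p) y
          have e0 : Function.uncurry f (y, t) = h' t *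
              (((Ioc u y).indicator (1:ℝ→ℝ) t - (Ioc y u).indicator 1 t) * p y) := by
            rw [hfdef]; simp [Function.uncurry]; ring
          rw [e0, Real.norm_eq_abs, abs_mul, hw, abs_neg,
            abs_of_nonneg (indicator_nonneg (fun x _ => hp0 x) y)]
        rw [he, integral_const_mul, integral_indicator measurableSet_Iio,
          Measure.restrict_restrict measurableSet_Iio, inter_comm,
          ← setIntegral_inter_eq hSm (fun x hx => p_eq_zero hp0 hppos hx),
          int_Iio, abs_mul, abs_wA hp0 hp1, if_neg (not_le.mpr htu2)]
  -- Step 2: pointwise identity on S for the outer integral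
  have h3 : ∫ y in S, (h y - h u) * p y = ∫ y in S, ∫ t in S, f y t := by
    apply setIntegral_congr_fun hSm
    intro y hy
    show (h y - h u) * p y = ∫ t in S, f y t
    have e1 : h y - h u = ∫ t in S, h' t *
        ((Ioc u y).indicator (1:ℝ→ℝ) t - (Ioc y u).indicator 1 t) := by
      rw [(hL u hu y hy).2, intervalIntegral_eq_indicator,
        integral_zero_off hSm (fun t ht => by rw [W_zero_off hSconn hu hy ht, mul_zero])]
    rw [e1, ← integral_mul_const]
  have h4 : ∫ y in S, ∫ t in S, f y t = ∫ t in S, ∫ y in S, f y t :=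
    integral_integral_swap hfint
  have h5 : ∫ t in S, (∫ y in S, f y t) = ∫ t in S, h' t * wA p u t := by
    apply integral_congr_ae
    filter_upwards [ae_ne_restrict S u] with t htu
    have e : (fun y => f y t) = fun y => h' t *
        (((Ioc u y).indicator (1:ℝ→ℝ) t - (Ioc y u).indicator 1 t) * p y) := by
      funext y; rw [hfdef]; ring
    rw [e, integral_const_mul, hinner t htu]
  rw [← h5, ← h4, ← h3, ← h1]

end LemB

section P1

variable {p : ℝ → ℝ} {S : Set ℝ}

lemma P1 (hSopen : IsOpen S) (hSconn : S.OrdConnected)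
    (hpmeas : Measurable p) (hp0 : ∀ x, 0 ≤ p x)
    (hppos : ∀ x : ℝ, 0 < p x ↔ x ∈ S) (hp1 : ∫ x, p x = 1)
    {h h' : ℝ → ℝ} (hm' : Measurable h') (hL : LocAC S h h')
    {x' : ℝ} (hx' : x' ∈ S)
    (hIF : IntegrableOn (fun t => |h' t| * cdfOf p t) (S ∩ Iic x') volume) :
    ∫ u in S ∩ Iio x', (h x' - h u) * p u = ∫ t in S ∩ Iic x', h' t * cdfOf p t := by
  have hSm : MeasurableSet S := hSopen.measurableSet
  have hpInt : Integrable p := int_p hp1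
  have hAm : MeasurableSet (S ∩ Iio x') := hSm.inter measurableSet_Iio
  have hBm : MeasurableSet (S ∩ Iic x') := hSm.inter measurableSet_Iic
  set A := S ∩ Iio x' with hA
  set B := S ∩ Iic x' with hB
  set f : ℝ → ℝ → ℝ := fun u t => ((Ioc u x').indicator h' t) * p u with hfdef
  have hIocB : ∀ u ∈ A, Ioc u x' ⊆ B := by
    intro u hu t ht
    exact ⟨hSconn.out hu.1 hx' ⟨ht.1.le, ht.2⟩, ht.2⟩
  have hfmeas : Measurable (Function.uncurry f) := by
    have e : Function.uncurry f
        = fun z : ℝ × ℝ => (if z.1 < z.2 ∧ z.2 ≤ x' then h' z.2 else 0) * p z.1 := by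
      funext z
      by_cases hz : z.1 < z.2 ∧ z.2 ≤ x'
      · rw [Function.uncurry, hfdef]
        simp only [indicator_of_mem (mem_Ioc.mpr hz), if_pos hz]
      · rw [Function.uncurry, hfdef]
        simp only [indicator_of_notMem (fun hc => hz (mem_Ioc.mp hc)), if_neg hz]
    rw [e]
    exact (Measurable.ite ((measurableSet_lt measurable_fst measurable_snd).inter
      (measurableSet_le measurable_snd measurable_const)) (hm'.comp measurable_snd)
      measurable_const).mul (hpmeas.comp measurable_fst)
  have hfint : Integrable (Function.uncurry f)
      ((volume.restrict A).prod (volume.restrict B)) := by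
    apply integrable_prod_of_bound₂ hfmeas (g := fun t => |h' t| * cdfOf p t)
    · refine Filter.Eventually.of_forall fun t => ?_
      apply Integrable.restrict (f := fun u => f u t)
      apply Integrable.mono' (hpInt.const_mul (|h' t|))
        ((hfmeas.comp (measurable_id.prodMk measurable_const)).aestronglyMeasurable)
      refine Filter.Eventually.of_forall fun u => ?_
      have hb : ‖f u t‖ ≤ |h' t| * p u := by
        rw [hfdef]
        simp only [Real.norm_eq_abs, abs_mul, abs_of_nonneg (hp0 u)]
        apply mul_le_mul_of_nonneg_right _ (hp0 u)
        by_cases ht : t ∈ Ioc u x'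
        · rw [indicator_of_mem ht]
        · rw [indicator_of_notMem ht]
          simp [abs_nonneg]
      exact hb
    · exact hIF
    · refine Filter.Eventually.of_forall fun t => ?_
      by_cases htx : t ≤ x'
      · have he : (fun u => ‖Function.uncurry f (u, t)‖)
            = fun u => |h' t| * (Iio t).indicator p u := by
          funext u
          by_cases hut : u < t
          · rw [Function.uncurry, hfdef]
            simp only [indicator_of_mem (mem_Ioc.mpr ⟨hut, htx⟩),
              indicator_of_mem (mem_Iio.mpr hut), Real.norm_eq_abs, abs_mul,
              abs_of_nonneg (hp0 u)]
          · rw [Function.uncurry, hfdef]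
            simp only [indicator_of_notMem (fun hc => hut (mem_Ioc.mp hc).1),
              indicator_of_notMem (fun hc => hut (mem_Iio.mp hc))]
            simp
        rw [he, integral_const_mul, integral_indicator measurableSet_Iio,
          Measure.restrict_restrict measurableSet_Iio]
        apply mul_le_mul_of_nonneg_left _ (abs_nonneg _)
        rw [← int_Iio (p := p) t]
        exact setIntegral_mono_set hpInt.integrableOn
          (Filter.Eventually.of_forall fun u => hp0 u)
          (HasSubset.Subset.eventuallyLE inter_subset_left)
      · have he : (fun u => ‖Function.uncurry f (u, t)‖) = fun u => 0 := by
          funext u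
          rw [Function.uncurry, hfdef]
          simp only [indicator_of_notMem (fun hc => htx (mem_Ioc.mp hc).2)]
          simp
        rw [he, integral_zero]
        exact mul_nonneg (abs_nonneg _) (F_nonneg hp0 t)
  have h3 : ∫ u in A, (h x' - h u) * p u = ∫ u in A, ∫ t in B, f u t := by
    apply setIntegral_congr_fun hAm
    intro u hu
    show (h x' - h u) * p u = ∫ t in B, f u t
    have e1 : h x' - h u = ∫ t in B, (Ioc u x').indicator h' t := by
      rw [(hL u hu.1 x' hx').2, intervalIntegral.integral_of_le hu.2.le,
        ← integral_indicator measurableSet_Ioc,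
        integral_zero_off hBm (fun t ht =>
          indicator_of_notMem (fun hc => ht (hIocB u hu hc)) h')]
    rw [e1, ← integral_mul_const]
  have h4 : ∫ u in A, ∫ t in B, f u t = ∫ t in B, ∫ u in A, f u t :=
    integral_integral_swap hfint
  have h5 : ∫ t in B, (∫ u in A, f u t) = ∫ t in B, h' t * cdfOf p t := by
    apply setIntegral_congr_fun hBm
    intro t ht
    show (∫ u in A, f u t) = h' t * cdfOf p t
    have e : (fun u => f u t) = fun u => h' t * (Iio t).indicator p u := by
      funext u
      by_cases hut : u < t
      · rw [hfdef]
        simp only [indicator_of_mem (mem_Ioc.mpr ⟨hut, ht.2⟩),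
          indicator_of_mem (mem_Iio.mpr hut)]
      · rw [hfdef]
        simp only [indicator_of_notMem (fun hc => hut (mem_Ioc.mp hc).1),
          indicator_of_notMem (fun hc => hut (mem_Iio.mp hc))]
        simp
    rw [e, integral_const_mul, integral_indicator measurableSet_Iio,
      Measure.restrict_restrict measurableSet_Iio]
    congr 1
    have hset : Iio t ∩ A = S ∩ Iio t := by
      rw [hA]
      ext u
      constructor
      · rintro ⟨h1, h2, _⟩; exact ⟨h2, h1⟩
      · rintro ⟨h1, h2⟩; exact ⟨h2, h1, lt_of_lt_of_le h2.out ht.2⟩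
    rw [hset, ← setIntegral_inter_eq hSm (fun x hx => p_eq_zero hp0 hppos hx), int_Iio]
  rw [h3, h4, h5]

end P1

section PartIII

variable {p : ℝ → ℝ} {S : Set ℝ}

lemma part_iii (hSopen : IsOpen S) (hSconn : S.OrdConnected)
    (hpmeas : Measurable p) (hp0 : ∀ x, 0 ≤ p x)
    (hppos : ∀ x : ℝ, 0 < p x ↔ x ∈ S) (hp1 : ∫ x, p x = 1)
    {h h' : ℝ → ℝ} (hm' : Measurable h') (hL : LocAC S h h')
    (hhp : Integrable (fun x => h x * p x))
    {x' : ℝ} (hx' : x' ∈ S)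
    (hi : Integrable (fun x => |h' x| * (kerK p x x' / p x) * p x)) :
    -invStein p h x' = ∫ x, (kerK p x x' / (p x * p x')) * h' x * p x := by
  have hSm : MeasurableSet S := hSopen.measurableSet
  have hpInt : Integrable p := int_p hp1
  have hpx' : 0 < p x' := (hppos x').2 hx'
  have hFpos : 0 < cdfOf p x' := F_pos hSopen hpmeas hp0 hppos hp1 hx'
  have hFlt : cdfOf p x' < 1 := F_lt_one hSopen hpmeas hp0 hppos hp1 hx'
  set c := min (cdfOf p x') (1 - cdfOf p x') with hc
  have hcpos : 0 < c := lt_min hFpos (by linarith)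
  set Eh := ∫ y, h y * p y with hEh
  have hiS : IntegrableOn (fun t => |h' t| * kerK p t x') S volume := by
    have e : (fun x => |h' x| * (kerK p x x' / p x) * p x)
        = S.indicator (fun t => |h' t| * kerK p t x') := by
      funext x
      by_cases hx : x ∈ S
      · have hpx : p x ≠ 0 := ne_of_gt ((hppos x).2 hx)
        rw [indicator_of_mem hx]
        field_simp
      · rw [indicator_of_notMem hx, p_eq_zero hp0 hppos hx]
        simp
    rw [e] at hi
    exact (integrable_indicator_iff hSm).1 hi
  have hkerK_cases : ∀ t, kerK p t x'
      = (if x' ≤ t then cdfOf p x' else (1 - cdfOf p x'))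
        * (if x' ≤ t then 1 - cdfOf p t else cdfOf p t) := by
    intro t
    rcases le_or_gt x' t with hle | hlt
    · rw [if_pos hle, if_pos hle, kerK_symm, kerK_eq_of_le hp0 hle]
    · rw [if_neg (not_le.mpr hlt), if_neg (not_le.mpr hlt), kerK_eq_of_le hp0 hlt.le]
      ring
  have key_bound : ∀ t, |h' t * wA p x' t| ≤ c⁻¹ * (|h' t| * kerK p t x') := by
    intro t
    rw [abs_mul, abs_wA hp0 hp1, hkerK_cases t]
    set w := if x' ≤ t then 1 - cdfOf p t else cdfOf p t with hw
    set d := if x' ≤ t then cdfOf p x' else (1 - cdfOf p x') with hd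
    have hw0 : 0 ≤ w := by
      rw [hw]; split
      · linarith [F_le_one hp0 hp1 t]
      · exact F_nonneg hp0 t
    have hcd : c ≤ d := by
      rw [hd, hc]; split
      · exact min_le_left _ _
      · exact min_le_right _ _
    rw [le_inv_mul_iff₀ hcpos]
    nlinarith [mul_nonneg (abs_nonneg (h' t)) hw0]
  have hI_B : IntegrableOn (fun t => h' t * wA p x' t) S volume := by
    apply Integrable.mono' (hiS.const_mul c⁻¹)
      ((hm'.mul (wA_meas hp0 hp1 x')).aestronglyMeasurable.restrict)
    exact Filter.Eventually.of_forall fun t => by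
      rw [Real.norm_eq_abs]; exact key_bound t
  have hIF : IntegrableOn (fun t => |h' t| * cdfOf p t) (S ∩ Iic x') volume := by
    apply Integrable.mono' (((hiS.mono_set inter_subset_left)).const_mul c⁻¹)
      ((hm'.abs.mul (F_meas hp0 hp1)).aestronglyMeasurable.restrict)
    filter_upwards [ae_restrict_mem (hSm.inter measurableSet_Iic)] with t ht
    simp only [Pi.mul_apply]
    rw [Real.norm_eq_abs, abs_of_nonneg (mul_nonneg (abs_nonneg _) (F_nonneg hp0 t)),
      le_inv_mul_iff₀ hcpos, kerK_eq_of_le hp0 ht.2]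
    have hcle : c ≤ 1 - cdfOf p x' := min_le_right _ _
    nlinarith [mul_nonneg (abs_nonneg (h' t)) (F_nonneg hp0 t)]
  have hpiece : IntegrableOn (fun t => h' t * (Iio x').indicator (cdfOf p) t) S volume := by
    apply Integrable.mono' (hiS.const_mul c⁻¹)
      ((hm'.mul ((F_meas hp0 hp1).indicator measurableSet_Iio)).aestronglyMeasurable.restrict)
    refine Filter.Eventually.of_forall fun t => ?_
    simp only [Pi.mul_apply]
    rw [Real.norm_eq_abs, abs_mul, le_inv_mul_iff₀ hcpos]
    by_cases ht : t ∈ Iio x'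
    · rw [indicator_of_mem ht, abs_of_nonneg (F_nonneg hp0 t),
        kerK_eq_of_le hp0 (le_of_lt ht.out)]
      have hcle : c ≤ 1 - cdfOf p x' := min_le_right _ _
      nlinarith [mul_nonneg (abs_nonneg (h' t)) (F_nonneg hp0 t)]
    · rw [indicator_of_notMem ht]
      simp only [abs_zero, mul_zero]
      exact mul_nonneg (abs_nonneg _) (kerK_nonneg hp0 hp1 t x')
  have hdecomp : ∀ t, kerK p t x'
      = cdfOf p x' * wA p x' t + (Iio x').indicator (cdfOf p) t := by
    intro t
    unfold wA
    rcases lt_or_ge t x' with hlt | hle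
    · rw [indicator_of_mem (mem_Iio.mpr hlt), if_neg (not_le.mpr hlt),
        kerK_eq_of_le hp0 hlt.le]
      ring
    · rw [indicator_of_notMem (fun hc => absurd (mem_Iio.mp hc) (not_lt.mpr hle)),
        if_pos hle, kerK_symm, kerK_eq_of_le hp0 hle]
      ring
  set T := ∫ t in S ∩ Iio x', h' t * cdfOf p t with hT
  have hnumL : ∫ t in S, h' t * kerK p t x' = cdfOf p x' * (Eh - h x') + T := by
    have e0 : (fun t => h' t * kerK p t x')
        = fun t => cdfOf p x' * (h' t * wA p x' t)
            + h' t * (Iio x').indicator (cdfOf p) t := by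
      funext t
      rw [hdecomp t]
      ring
    rw [e0, integral_add (hI_B.const_mul _) hpiece, integral_const_mul,
      lemB hSopen hSconn hpmeas hp0 hppos hp1 hm' hL hhp hx' hI_B]
    congr 1
    have e2 : (fun t => h' t * (Iio x').indicator (cdfOf p) t)
        = (Iio x').indicator (fun t => h' t * cdfOf p t) := by
      funext t
      by_cases ht : t ∈ Iio x'
      · rw [indicator_of_mem ht, indicator_of_mem ht]
      · rw [indicator_of_notMem ht, indicator_of_notMem ht, mul_zero]
    rw [e2, integral_indicator measurableSet_Iio,
      Measure.restrict_restrict measurableSet_Iio, inter_comm, hT]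
  have hFx' : ∫ u in S ∩ Iio x', p u = cdfOf p x' := by
    rw [← setIntegral_inter_eq hSm (fun x hx => p_eq_zero hp0 hppos hx), int_Iio]
  have hnumR : ∫ u in Iio x', (Eh - h u) * p u = cdfOf p x' * (Eh - h x') + T := by
    rw [setIntegral_inter_eq hSm (fun x hx => by rw [p_eq_zero hp0 hppos hx, mul_zero])]
    have hint1 : IntegrableOn (fun u => (Eh - h x') * p u) (S ∩ Iio x') volume :=
      (hpInt.const_mul _).integrableOn
    have hint2 : IntegrableOn (fun u => (h x' - h u) * p u) (S ∩ Iio x') volume := by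
      have e : (fun u => (h x' - h u) * p u) = fun u => h x' * p u - h u * p u := by
        funext u; ring
      rw [e]
      exact ((hpInt.const_mul (h x')).sub hhp).integrableOn
    have e3 : ∫ u in S ∩ Iio x', (Eh - h u) * p u
        = (∫ u in S ∩ Iio x', (Eh - h x') * p u)
          + ∫ u in S ∩ Iio x', (h x' - h u) * p u := by
      rw [← integral_add hint1 hint2]
      congr 1
      funext u
      ring
    rw [e3, integral_const_mul, hFx',
      P1 hSopen hSconn hpmeas hp0 hppos hp1 hm' hL hx' hIF]
    have e4 : ∫ t in S ∩ Iic x', h' t * cdfOf p t = T := by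
      rw [hT]
      exact (setIntegral_congr_set
        (Filter.EventuallyEq.inter (Filter.EventuallyEq.refl _ _) Iio_ae_eq_Iic)).symm
    rw [e4]
    ring
  have hRHS : ∫ x, (kerK p x x' / (p x * p x')) * h' x * p x
      = (∫ t in S, h' t * kerK p t x') / p x' := by
    have e : (fun x => (kerK p x x' / (p x * p x')) * h' x * p x)
        = S.indicator (fun t => (h' t * kerK p t x') / p x') := by
      funext x
      by_cases hx : x ∈ S
      · have hpx : p x ≠ 0 := ne_of_gt ((hppos x).2 hx)
        rw [indicator_of_mem hx]
        field_simp
      · rw [indicator_of_notMem hx, p_eq_zero hp0 hppos hx]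
        simp
    rw [e, integral_indicator hSm, integral_div]
  have hLHS : -invStein p h x' = (∫ u in Iio x', (Eh - h u) * p u) / p x' := by
    unfold invStein
    rw [← neg_div, ← integral_neg]
    congr 1
    refine setIntegral_congr_fun measurableSet_Iio fun u _ => ?_
    show -((h u - ∫ y, h y * p y) * p u) = (Eh - h u) * p u
    rw [hEh]
    ring
  rw [hLHS, hRHS, hnumL, ← hnumR]

end PartIII

section KerId

variable {p : ℝ → ℝ} {S : Set ℝ}

lemma int_Ioc (hp0 : ∀ x, 0 ≤ p x) (hp1 : ∫ x, p x = 1) {x y : ℝ} (hxy : x ≤ y) :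
    ∫ u in Ioc x y, p u = cdfOf p y - cdfOf p x := by
  have hpInt : Integrable p := int_p hp1
  have hdisj : Disjoint (Iic x) (Ioc x y) := by
    rw [disjoint_left]
    intro u hu hu2
    exact absurd hu2.1 (not_lt.mpr hu)
  have hunion : Iic x ∪ Ioc x y = Iic y := Iic_union_Ioc_eq_Iic hxy
  have := setIntegral_union hdisj measurableSet_Ioc hpInt.integrableOn hpInt.integrableOn
    (f := p) (μ := volume)
  rw [hunion] at this
  unfold cdfOf
  linarith

/-- Kernel identity: `∫_S wA(u,x) wA(u,y) p(u) du = K(x,y)`. -/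
lemma kerId (hSopen : IsOpen S) (hpmeas : Measurable p) (hp0 : ∀ x, 0 ≤ p x)
    (hppos : ∀ x : ℝ, 0 < p x ↔ x ∈ S) (hp1 : ∫ x, p x = 1) (x y : ℝ) :
    ∫ u in S, (wA p u x * wA p u y) * p u = kerK p x y := by
  have hSm : MeasurableSet S := hSopen.measurableSet
  have hpInt : Integrable p := int_p hp1
  have e0 : ∫ u in S, (wA p u x * wA p u y) * p u
      = ∫ u, (wA p u x * wA p u y) * p u :=
    (integral_zero_off hSm (fun u hu => by rw [p_eq_zero hp0 hppos hu, mul_zero])).symm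
  rw [e0]
  have e1 : (fun u => (wA p u x * wA p u y) * p u)
      = fun u => (Iic (min x y)).indicator p u
          - cdfOf p y * (Iic x).indicator p u
          - cdfOf p x * (Iic y).indicator p u
          + (cdfOf p x * cdfOf p y) * p u := by
    funext u
    unfold wA
    by_cases h1 : u ≤ x <;> by_cases h2 : u ≤ y
    · rw [indicator_of_mem (mem_Iic.mpr (le_min h1 h2)), indicator_of_mem (mem_Iic.mpr h1),
        indicator_of_mem (mem_Iic.mpr h2), if_pos h1, if_pos h2]
      ring
    · rw [indicator_of_notMem (fun hc => h2 (le_trans (mem_Iic.mp hc) (min_le_right x y))),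
        indicator_of_mem (mem_Iic.mpr h1),
        indicator_of_notMem (fun hc => h2 (mem_Iic.mp hc)), if_pos h1, if_neg h2]
      ring
    · rw [indicator_of_notMem (fun hc => h1 (le_trans (mem_Iic.mp hc) (min_le_left x y))),
        indicator_of_notMem (fun hc => h1 (mem_Iic.mp hc)),
        indicator_of_mem (mem_Iic.mpr h2), if_neg h1, if_pos h2]
      ring
    · rw [indicator_of_notMem (fun hc => h1 (le_trans (mem_Iic.mp hc) (min_le_left x y))),
        indicator_of_notMem (fun hc => h1 (mem_Iic.mp hc)),
        indicator_of_notMem (fun hc => h2 (mem_Iic.mp hc)), if_neg h1, if_neg h2]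
      ring
  rw [e1]
  have i1 : Integrable ((Iic (min x y)).indicator p) :=
    hpInt.indicator measurableSet_Iic
  have i2 : Integrable (fun u => cdfOf p y * (Iic x).indicator p u) :=
    (hpInt.indicator measurableSet_Iic).const_mul _
  have i3 : Integrable (fun u => cdfOf p x * (Iic y).indicator p u) :=
    (hpInt.indicator measurableSet_Iic).const_mul _
  have i4 : Integrable (fun u => (cdfOf p x * cdfOf p y) * p u) := hpInt.const_mul _
  have j1 : Integrable (fun u => (Iic (min x y)).indicator p u
      - cdfOf p y * (Iic x).indicator p u) := i1.sub i2
  have j2 : Integrable (fun u => ((Iic (min x y)).indicator p u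
      - cdfOf p y * (Iic x).indicator p u) - cdfOf p x * (Iic y).indicator p u) := j1.sub i3
  rw [integral_add j2 i4, integral_sub j1 i3, integral_sub i1 i2, integral_indicator measurableSet_Iic,
    integral_const_mul, integral_const_mul, integral_const_mul,
    integral_indicator measurableSet_Iic, integral_indicator measurableSet_Iic, hp1]
  unfold kerK cdfOf
  ring

/-- Tonelli bound: `∫_S |wA(u,x)| |wA(u,y)| p(u) du ≤ 3 K(x,y)`, case `x ≤ y`. -/
lemma tonelliBound_le (hSopen : IsOpen S) (hpmeas : Measurable p) (hp0 : ∀ x, 0 ≤ p x)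
    (hppos : ∀ x : ℝ, 0 < p x ↔ x ∈ S) (hp1 : ∫ x, p x = 1) {x y : ℝ} (hxy : x ≤ y) :
    ∫ u in S, (|wA p u x| * |wA p u y|) * p u ≤ 3 * kerK p x y := by
  have hSm : MeasurableSet S := hSopen.measurableSet
  have hpInt : Integrable p := int_p hp1
  have e0 : ∫ u in S, (|wA p u x| * |wA p u y|) * p u
      = ∫ u, (|wA p u x| * |wA p u y|) * p u :=
    (integral_zero_off hSm (fun u hu => by rw [p_eq_zero hp0 hppos hu, mul_zero])).symm
  rw [e0]
  have e1 : (fun u => (|wA p u x| * |wA p u y|) * p u)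
      = fun u => ((1 - cdfOf p x) * (1 - cdfOf p y)) * (Iic x).indicator p u
          + (cdfOf p x * (1 - cdfOf p y)) * (Ioc x y).indicator p u
          + (cdfOf p x * cdfOf p y) * (Ioi y).indicator p u := by
    funext u
    rw [abs_wA hp0 hp1, abs_wA hp0 hp1]
    by_cases h1 : u ≤ x <;> by_cases h2 : u ≤ y
    · rw [if_pos h1, if_pos h2, indicator_of_mem (mem_Iic.mpr h1),
        indicator_of_notMem (fun hc => (mem_Ioc.mp hc).1.not_ge h1),
        indicator_of_notMem (fun hc => (mem_Ioi.mp hc).not_ge h2)]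
      ring
    · exact absurd (h1.trans hxy) h2
    · rw [if_neg h1, if_pos h2, indicator_of_notMem (fun hc => h1 (mem_Iic.mp hc)),
        indicator_of_mem (mem_Ioc.mpr ⟨not_le.mp h1, h2⟩),
        indicator_of_notMem (fun hc => (mem_Ioi.mp hc).not_ge h2)]
      ring
    · rw [if_neg h1, if_neg h2, indicator_of_notMem (fun hc => h1 (mem_Iic.mp hc)),
        indicator_of_notMem (fun hc => h2 (mem_Ioc.mp hc).2),
        indicator_of_mem (mem_Ioi.mpr (not_le.mp h2))]
      ring
  rw [e1]
  have i1 : Integrable (fun u => ((1 - cdfOf p x) * (1 - cdfOf p y)) * (Iic x).indicator p u) :=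
    (hpInt.indicator measurableSet_Iic).const_mul _
  have i2 : Integrable (fun u => (cdfOf p x * (1 - cdfOf p y)) * (Ioc x y).indicator p u) :=
    (hpInt.indicator measurableSet_Ioc).const_mul _
  have i3 : Integrable (fun u => (cdfOf p x * cdfOf p y) * (Ioi y).indicator p u) :=
    (hpInt.indicator measurableSet_Ioi).const_mul _
  have j1 : Integrable (fun u => ((1 - cdfOf p x) * (1 - cdfOf p y)) * (Iic x).indicator p u
      + (cdfOf p x * (1 - cdfOf p y)) * (Ioc x y).indicator p u) := i1.add i2
  rw [integral_add j1 i3, integral_add i1 i2, integral_const_mul, integral_const_mul,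
    integral_const_mul, integral_indicator measurableSet_Iic,
    integral_indicator measurableSet_Ioc, integral_indicator measurableSet_Ioi,
    int_Ioc hp0 hp1 hxy, int_Ioi hp1, kerK_eq_of_le hp0 hxy]
  have h1 := F_nonneg hp0 x
  have h2 := F_nonneg hp0 y
  have h3 := F_le_one hp0 hp1 x
  have h4 := F_le_one hp0 hp1 y
  have h5 : cdfOf p x ≤ cdfOf p y := F_mono hp0 hp1 hxy
  have e2 : (∫ u in Iic x, p u) = cdfOf p x := rfl
  rw [e2]
  nlinarith [mul_nonneg (mul_nonneg h1 (sub_nonneg.mpr h4))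
    (show (0:ℝ) ≤ 1 + cdfOf p x - cdfOf p y by linarith)]

lemma tonelliBound (hSopen : IsOpen S) (hpmeas : Measurable p) (hp0 : ∀ x, 0 ≤ p x)
    (hppos : ∀ x : ℝ, 0 < p x ↔ x ∈ S) (hp1 : ∫ x, p x = 1) (x y : ℝ) :
    ∫ u in S, (|wA p u x| * |wA p u y|) * p u ≤ 3 * kerK p x y := by
  rcases le_total x y with hxy | hxy
  · exact tonelliBound_le hSopen hpmeas hp0 hppos hp1 hxy
  · have e : (fun u => (|wA p u x| * |wA p u y|) * p u)
        = fun u => (|wA p u y| * |wA p u x|) * p u := by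
      funext u; ring
    rw [e, kerK_symm]
    exact tonelliBound_le hSopen hpmeas hp0 hppos hp1 hxy

end KerId

section PartII

variable {p : ℝ → ℝ} {S : Set ℝ}

lemma sq_dominated (hpmeas : Measurable p) (hp0 : ∀ x, 0 ≤ p x) (hp1 : ∫ x, p x = 1)
    {h : ℝ → ℝ} (hmh : Measurable h)
    (hh2 : Integrable (fun x => h x ^ 2 * p x)) :
    Integrable (fun x => h x * p x) := by
  have hpInt : Integrable p := int_p hp1
  apply Integrable.mono' ((hh2.add hpInt).div_const 2)
    ((hmh.mul hpmeas).aestronglyMeasurable)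
  refine Filter.Eventually.of_forall fun x => ?_
  simp only [Pi.mul_apply]
  rw [Real.norm_eq_abs, abs_mul, abs_of_nonneg (hp0 x)]
  have e2 : p x * (|h x| - 1) ^ 2 = h x ^ 2 * p x - 2 * (|h x| * p x) + p x := by
    rw [← sq_abs (h x)]
    ring
  have key := mul_nonneg (hp0 x) (sq_nonneg (|h x| - 1))
  rw [e2] at key
  simp only [Pi.add_apply]
  linarith

lemma sq_dominated_mul (hpmeas : Measurable p) (hp0 : ∀ x, 0 ≤ p x) (hp1 : ∫ x, p x = 1)
    {h g : ℝ → ℝ} (hmh : Measurable h) (hmg : Measurable g)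
    (hh2 : Integrable (fun x => h x ^ 2 * p x)) (hg2 : Integrable (fun x => g x ^ 2 * p x)) :
    Integrable (fun x => h x * g x * p x) := by
  apply Integrable.mono' ((hh2.add hg2).div_const 2)
    (((hmh.mul hmg).mul hpmeas).aestronglyMeasurable)
  refine Filter.Eventually.of_forall fun x => ?_
  simp only [Pi.mul_apply]
  rw [Real.norm_eq_abs, abs_mul, abs_mul, abs_of_nonneg (hp0 x)]
  have e2 : p x * (|h x| - |g x|) ^ 2
      = h x ^ 2 * p x - 2 * (|h x| * |g x| * p x) + g x ^ 2 * p x := by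
    rw [← sq_abs (h x), ← sq_abs (g x)]
    ring
  have key := mul_nonneg (hp0 x) (sq_nonneg (|h x| - |g x|))
  rw [e2] at key
  simp only [Pi.add_apply]
  linarith

lemma part_ii (hSopen : IsOpen S) (hSconn : S.OrdConnected)
    (hpmeas : Measurable p) (hp0 : ∀ x, 0 ≤ p x)
    (hppos : ∀ x : ℝ, 0 < p x ↔ x ∈ S) (hp1 : ∫ x, p x = 1)
    {h h' g g' : ℝ → ℝ} (hmh : Measurable h) (hmh' : Measurable h')
    (hmg : Measurable g) (hmg' : Measurable g')
    (hLh : LocAC S h h') (hLg : LocAC S g g')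
    (hh2 : Integrable (fun x => h x ^ 2 * p x)) (hg2 : Integrable (fun x => g x ^ 2 * p x))
    (hint : IntegrableOn (fun q : ℝ × ℝ => h' q.1 * kerK p q.1 q.2 * g' q.2) (S ×ˢ S)
      (volume.prod volume)) :
    (∫ x, h x * g x * p x) - (∫ x, h x * p x) * (∫ x, g x * p x)
      = ∫ x in S, ∫ y in S, h' x * kerK p x y * g' y := by
  have hSm : MeasurableSet S := hSopen.measurableSet
  have hpInt : Integrable p := int_p hp1
  have hhp : Integrable (fun x => h x * p x) := sq_dominated hpmeas hp0 hp1 hmh hh2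
  have hgp : Integrable (fun x => g x * p x) := sq_dominated hpmeas hp0 hp1 hmg hg2
  have hhgp : Integrable (fun x => h x * g x * p x) :=
    sq_dominated_mul hpmeas hp0 hp1 hmh hmg hh2 hg2
  set Eh := ∫ x, h x * p x with hEh
  set Eg := ∫ x, g x * p x with hEg
  set μS := volume.restrict S with hμS
  have hint' : Integrable (fun q : ℝ × ℝ => h' q.1 * kerK p q.1 q.2 * g' q.2)
      (μS.prod μS) := by
    rw [hμS, Measure.prod_restrict]
    exact hint
  -- the triple integrand
  set Φ : ℝ × ℝ → ℝ → ℝ := fun z u =>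
    ((h' z.1 * wA p u z.1) * (g' z.2 * wA p u z.2)) * p u with hΦdef
  have hw1 : Measurable fun w : (ℝ × ℝ) × ℝ => wA p w.2 w.1.1 := by
    unfold wA
    exact (Measurable.ite (measurableSet_le measurable_snd
        (measurable_fst.comp measurable_fst)) measurable_const measurable_const).sub
      ((F_meas hp0 hp1).comp (measurable_fst.comp measurable_fst))
  have hw2 : Measurable fun w : (ℝ × ℝ) × ℝ => wA p w.2 w.1.2 := by
    unfold wA
    exact (Measurable.ite (measurableSet_le measurable_snd
        (measurable_snd.comp measurable_fst)) measurable_const measurable_const).sub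
      ((F_meas hp0 hp1).comp (measurable_snd.comp measurable_fst))
  have hΦmeas : Measurable (Function.uncurry Φ) := by
    have e : Function.uncurry Φ = fun w : (ℝ × ℝ) × ℝ =>
        ((h' w.1.1 * wA p w.2 w.1.1) * (g' w.1.2 * wA p w.2 w.1.2)) * p w.2 := rfl
    rw [e]
    exact (((hmh'.comp (measurable_fst.comp measurable_fst)).mul hw1).mul
      ((hmg'.comp (measurable_snd.comp measurable_fst)).mul hw2)).mul
      (hpmeas.comp measurable_snd)
  have hΦint : Integrable (Function.uncurry Φ) ((μS.prod μS).prod μS) := by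
    apply integrable_prod_of_bound₁ hΦmeas
      (g := fun z => 3 * ‖h' z.1 * kerK p z.1 z.2 * g' z.2‖)
    · refine Filter.Eventually.of_forall fun z => ?_
      have hb : Integrable (fun u => Φ z u) μS := by
        apply Integrable.mono' ((hpInt.const_mul (|h' z.1| * |g' z.2|)).restrict (s := S))
          ((hΦmeas.comp (measurable_const.prodMk measurable_id)).aestronglyMeasurable)
        refine Filter.Eventually.of_forall fun u => ?_
        have b1 : |h' z.1| * |wA p u z.1| ≤ |h' z.1| := by
          have := mul_le_mul_of_nonneg_left (abs_wA_le_one hp0 hp1 u z.1) (abs_nonneg (h' z.1))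
          linarith
        have b2 : |g' z.2| * |wA p u z.2| ≤ |g' z.2| := by
          have := mul_le_mul_of_nonneg_left (abs_wA_le_one hp0 hp1 u z.2) (abs_nonneg (g' z.2))
          linarith
        have hb0 : ‖Φ z u‖ = ((|h' z.1| * |wA p u z.1|) * (|g' z.2| * |wA p u z.2|)) * p u := by
          rw [hΦdef]
          simp only [Real.norm_eq_abs, abs_mul, abs_of_nonneg (hp0 u)]
        have hbb : ‖Φ z u‖ ≤ |h' z.1| * |g' z.2| * p u := by
          rw [hb0]
          apply mul_le_mul_of_nonneg_right _ (hp0 u)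
          exact mul_le_mul b1 b2 (mul_nonneg (abs_nonneg _) (abs_nonneg _)) (abs_nonneg _)
        exact hbb
      exact hb
    · exact hint'.norm.const_mul 3
    · refine Filter.Eventually.of_forall fun z => ?_
      have e : (fun u => ‖Function.uncurry Φ (z, u)‖)
          = fun u => (|h' z.1| * |g' z.2|) * ((|wA p u z.1| * |wA p u z.2|) * p u) := by
        funext u
        have e0 : Function.uncurry Φ (z, u)
            = ((h' z.1 * wA p u z.1) * (g' z.2 * wA p u z.2)) * p u := rfl
        rw [e0, Real.norm_eq_abs, abs_mul, abs_mul, abs_mul, abs_mul, abs_of_nonneg (hp0 u)]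
        ring
      rw [e, integral_const_mul]
      have hTB := tonelliBound hSopen hpmeas hp0 hppos hp1 z.1 z.2
      have e2 : ‖h' z.1 * kerK p z.1 z.2 * g' z.2‖
          = |h' z.1| * kerK p z.1 z.2 * |g' z.2| := by
        rw [Real.norm_eq_abs, abs_mul, abs_mul, abs_of_nonneg (kerK_nonneg hp0 hp1 _ _)]
      rw [e2]
      calc (|h' z.1| * |g' z.2|) * ∫ u in S, (|wA p u z.1| * |wA p u z.2|) * p u
          ≤ (|h' z.1| * |g' z.2|) * (3 * kerK p z.1 z.2) :=
            mul_le_mul_of_nonneg_left hTB (mul_nonneg (abs_nonneg _) (abs_nonneg _))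
        _ = 3 * (|h' z.1| * kerK p z.1 z.2 * |g' z.2|) := by ring
  -- the chain of equalities
  have c1 : ∫ x in S, ∫ y in S, h' x * kerK p x y * g' y
      = ∫ z : ℝ × ℝ, h' z.1 * kerK p z.1 z.2 * g' z.2 ∂(μS.prod μS) :=
    (integral_prod _ hint').symm
  have c2 : ∫ z : ℝ × ℝ, h' z.1 * kerK p z.1 z.2 * g' z.2 ∂(μS.prod μS)
      = ∫ z : ℝ × ℝ, (∫ u, Φ z u ∂μS) ∂(μS.prod μS) := by
    apply integral_congr_ae
    refine Filter.Eventually.of_forall fun z => ?_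
    have e : (fun u => Φ z u)
        = fun u => (h' z.1 * g' z.2) * ((wA p u z.1 * wA p u z.2) * p u) := by
      funext u
      rw [hΦdef]
      ring
    show h' z.1 * kerK p z.1 z.2 * g' z.2 = ∫ u, Φ z u ∂μS
    rw [e, integral_const_mul]
    have hker : ∫ u, (wA p u z.1 * wA p u z.2) * p u ∂μS = kerK p z.1 z.2 :=
      kerId hSopen hpmeas hp0 hppos hp1 z.1 z.2
    rw [hker]
    ring
  have c3 : ∫ z : ℝ × ℝ, (∫ u, Φ z u ∂μS) ∂(μS.prod μS)
      = ∫ u, (∫ z : ℝ × ℝ, Φ z u ∂(μS.prod μS)) ∂μS :=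
    integral_integral_swap hΦint
  have c4 : ∫ u, (∫ z : ℝ × ℝ, Φ z u ∂(μS.prod μS)) ∂μS
      = ∫ u in S, ((Eh - h u) * (Eg - g u)) * p u := by
    apply integral_congr_ae
    filter_upwards [hΦint.prod_left_ae, ae_restrict_mem hSm] with u hslice huS
    have hpu : 0 < p u := (hppos u).2 huS
    set A : ℝ → ℝ := fun x => h' x * wA p u x with hA
    set B : ℝ → ℝ := fun y => g' y * wA p u y with hB
    have hslice' : Integrable (fun z : ℝ × ℝ => A z.1 * B z.2) (μS.prod μS) := by
      refine (hslice.const_mul (p u)⁻¹).congr (Filter.Eventually.of_forall fun z => ?_)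
      show (p u)⁻¹ * Function.uncurry Φ (z, u) = A z.1 * B z.2
      have e0 : Function.uncurry Φ (z, u) = (A z.1 * B z.2) * p u := rfl
      rw [e0]
      field_simp
    have hΦz : (fun z : ℝ × ℝ => Φ z u) = fun z => (A z.1 * B z.2) * p u := rfl
    by_cases hAint : Integrable A μS
    · by_cases hBint : Integrable B μS
      · have eA : ∫ x, A x ∂μS = Eh - h u :=
          lemB hSopen hSconn hpmeas hp0 hppos hp1 hmh' hLh hhp huS hAint
        have eB : ∫ y, B y ∂μS = Eg - g u :=
          lemB hSopen hSconn hpmeas hp0 hppos hp1 hmg' hLg hgp huS hBint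
        show ∫ z : ℝ × ℝ, Φ z u ∂(μS.prod μS) = ((Eh - h u) * (Eg - g u)) * p u
        rw [hΦz, integral_mul_const, integral_prod_mul, eA, eB]
      · -- B not integrable: then A vanishes a.e.
        have hA0 : ∀ᵐ x ∂μS, A x = 0 := by
          filter_upwards [hslice'.prod_right_ae] with x hx
          by_contra hAx
          refine hBint ((hx.const_mul (A x)⁻¹).congr
            (Filter.Eventually.of_forall fun y => ?_))
          show (A x)⁻¹ * (A x * B y) = B y
          field_simp
        have hAintzero : Integrable A μS :=
          (integrable_zero _ _ _).congr (hA0.mono fun x hx => hx.symm)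
        have eA : ∫ x, A x ∂μS = Eh - h u :=
          lemB hSopen hSconn hpmeas hp0 hppos hp1 hmh' hLh hhp huS hAintzero
        have eA0 : ∫ x, A x ∂μS = 0 := integral_eq_zero_of_ae hA0
        have hEhu : Eh - h u = 0 := by rw [← eA]; exact eA0
        have hnull : (μS.prod μS) {z : ℝ × ℝ | Φ z u ≠ 0} = 0 := by
          apply measure_mono_null
            (show {z : ℝ × ℝ | Φ z u ≠ 0} ⊆ {x | A x ≠ 0} ×ˢ univ from ?_)
          · rw [Measure.prod_prod]
            have hA0' : μS {x | A x ≠ 0} = 0 := ae_iff.mp hA0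
            rw [hA0', zero_mul]
          · intro z hz
            refine ⟨fun hAz => hz ?_, mem_univ _⟩
            show Φ z u = 0
            have e0 : Φ z u = (A z.1 * B z.2) * p u := rfl
            rw [e0, hAz]
            ring
        have hzero : ∫ z : ℝ × ℝ, Φ z u ∂(μS.prod μS) = 0 := by
          apply integral_eq_zero_of_ae
          rw [Filter.EventuallyEq, ae_iff]
          simp only [Pi.zero_apply]
          exact hnull
        show ∫ z : ℝ × ℝ, Φ z u ∂(μS.prod μS) = ((Eh - h u) * (Eg - g u)) * p u
        rw [hzero, hEhu]
        ring
    · -- A not integrable: then B vanishes a.e.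
      have hB0 : ∀ᵐ y ∂μS, B y = 0 := by
        filter_upwards [hslice'.prod_left_ae] with y hy
        by_contra hBy
        refine hAint ((hy.const_mul (B y)⁻¹).congr
          (Filter.Eventually.of_forall fun x => ?_))
        show (B y)⁻¹ * (A x * B y) = A x
        field_simp
      have hBintzero : Integrable B μS :=
        (integrable_zero _ _ _).congr (hB0.mono fun y hy => hy.symm)
      have eB : ∫ y, B y ∂μS = Eg - g u :=
        lemB hSopen hSconn hpmeas hp0 hppos hp1 hmg' hLg hgp huS hBintzero
      have eB0 : ∫ y, B y ∂μS = 0 := integral_eq_zero_of_ae hB0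
      have hEgu : Eg - g u = 0 := by rw [← eB]; exact eB0
      have hnull : (μS.prod μS) {z : ℝ × ℝ | Φ z u ≠ 0} = 0 := by
        apply measure_mono_null
          (show {z : ℝ × ℝ | Φ z u ≠ 0} ⊆ univ ×ˢ {y | B y ≠ 0} from ?_)
        · rw [Measure.prod_prod]
          have hB0' : μS {y | B y ≠ 0} = 0 := ae_iff.mp hB0
          rw [hB0', mul_zero]
        · intro z hz
          refine ⟨mem_univ _, fun hBz => hz ?_⟩
          show Φ z u = 0
          have e0 : Φ z u = (A z.1 * B z.2) * p u := rfl
          rw [e0, hBz]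
          ring
      have hzero : ∫ z : ℝ × ℝ, Φ z u ∂(μS.prod μS) = 0 := by
        apply integral_eq_zero_of_ae
        rw [Filter.EventuallyEq, ae_iff]
        simp only [Pi.zero_apply]
        exact hnull
      show ∫ z : ℝ × ℝ, Φ z u ∂(μS.prod μS) = ((Eh - h u) * (Eg - g u)) * p u
      rw [hzero, hEgu]
      ring
  have c5 : ∫ u in S, ((Eh - h u) * (Eg - g u)) * p u
      = (∫ x, h x * g x * p x) - Eh * Eg := by
    rw [← integral_zero_off hSm
      (fun u hu => by rw [p_eq_zero hp0 hppos hu, mul_zero])]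
    have e : (fun u => ((Eh - h u) * (Eg - g u)) * p u)
        = fun u => h u * g u * p u - Eh * (g u * p u) - Eg * (h u * p u)
            + (Eh * Eg) * p u := by
      funext u
      ring
    rw [e]
    have j1 : Integrable (fun u => h u * g u * p u - Eh * (g u * p u)) :=
      hhgp.sub (hgp.const_mul Eh)
    have j2 : Integrable (fun u => h u * g u * p u - Eh * (g u * p u)
        - Eg * (h u * p u)) := j1.sub (hhp.const_mul Eg)
    rw [integral_add j2 (hpInt.const_mul _), integral_sub j1 (hhp.const_mul Eg),
      integral_sub hhgp (hgp.const_mul Eh), integral_const_mul, integral_const_mul,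
      integral_const_mul, hp1, hEh, hEg]
    ring
  rw [c1, c2, c3, c4, c5]

end PartII

end RepII

/-- Representation formula II, continuous case: for a probability density `p` positive
exactly on the open interval `S`, with kernel `K_p(x,x') = F(min(x,x')) − F(x)F(x')`:
(i) `0 ≤ K_p ≤ 1`; (ii) the covariance of `h(X)` and `g(X)` equals both
`∫_S ∫_S h' K_p g'` and `E[h'(X₁) (K_p(X₁,X₂)/(p(X₁)p(X₂))) g'(X₂)]`;
(iii) `−L_p h(x') = E[(K_p(X,x')/(p(X)p(x'))) h'(X)]` for `x' ∈ S`. -/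
theorem representation_formula_II_continuous
    (p : ℝ → ℝ) (S : Set ℝ) (hSopen : IsOpen S) (hSconn : S.OrdConnected)
    (hpmeas : Measurable p) (hp0 : ∀ x, 0 ≤ p x)
    (hppos : ∀ x : ℝ, 0 < p x ↔ x ∈ S)
    (hp1 : ∫ x, p x = 1) :
    (∀ x x' : ℝ, 0 ≤ kerK p x x' ∧ kerK p x x' ≤ 1) ∧
    (∀ h h' g g' : ℝ → ℝ, Measurable h → Measurable h' → Measurable g → Measurable g' →
      LocAC S h h' → LocAC S g g' →
      Integrable (fun x => h x ^ 2 * p x) → Integrable (fun x => g x ^ 2 * p x) →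
      IntegrableOn (fun q : ℝ × ℝ => h' q.1 * kerK p q.1 q.2 * g' q.2) (S ×ˢ S)
        (volume.prod volume) →
      ((∫ x, h x * g x * p x) - (∫ x, h x * p x) * (∫ x, g x * p x) =
          ∫ x in S, ∫ y in S, h' x * kerK p x y * g' y ∧
        (∫ x, h x * g x * p x) - (∫ x, h x * p x) * (∫ x, g x * p x) =
          ∫ x, ∫ y, h' x * (kerK p x y / (p x * p y)) * g' y * (p x * p y))) ∧
    (∀ h h' : ℝ → ℝ, Measurable h → Measurable h' → LocAC S h h' →
      Integrable (fun x => h x * p x) →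
      ∀ x' ∈ S,
        Integrable (fun x => |h' x| * (kerK p x x' / p x) * p x) →
        -invStein p h x' = ∫ x, (kerK p x x' / (p x * p x')) * h' x * p x) := by
  have hSm : MeasurableSet S := hSopen.measurableSet
  refine ⟨fun x x' => ⟨RepII.kerK_nonneg hp0 hp1 x x', RepII.kerK_le_one hp0 hp1 x x'⟩, ?_, ?_⟩
  · intro h h' g g' hmh hmh' hmg hmg' hLh hLg hh2 hg2 hint
    have hfirst := RepII.part_ii hSopen hSconn hpmeas hp0 hppos hp1 hmh hmh' hmg hmg'
      hLh hLg hh2 hg2 hint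
    refine ⟨hfirst, ?_⟩
    rw [hfirst]
    have e : (fun x => ∫ y, h' x * (kerK p x y / (p x * p y)) * g' y * (p x * p y))
        = S.indicator (fun x => ∫ y in S, h' x * kerK p x y * g' y) := by
      funext x
      by_cases hx : x ∈ S
      · rw [Set.indicator_of_mem hx]
        have hpx : p x ≠ 0 := ne_of_gt ((hppos x).2 hx)
        have einner : (fun y => h' x * (kerK p x y / (p x * p y)) * g' y * (p x * p y))
            = S.indicator (fun y => h' x * kerK p x y * g' y) := by
          funext y
          by_cases hy : y ∈ S
          · have hpy : p y ≠ 0 := ne_of_gt ((hppos y).2 hy)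
            rw [Set.indicator_of_mem hy]
            field_simp
          · rw [Set.indicator_of_notMem hy, RepII.p_eq_zero hp0 hppos hy]
            simp
        rw [einner, integral_indicator hSm]
      · rw [Set.indicator_of_notMem hx, RepII.p_eq_zero hp0 hppos hx]
        simp
    rw [show (∫ x, ∫ y, h' x * (kerK p x y / (p x * p y)) * g' y * (p x * p y))
        = ∫ x, S.indicator (fun x => ∫ y in S, h' x * kerK p x y * g' y) x from by rw [← e],
      integral_indicator hSm]
  · intro h h' hmh hmh' hL hhp x' hx' hi
    exact RepII.part_iii hSopen hSconn hpmeas hp0 hppos hp1 hmh' hL hhp hx' hi
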